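/- For the cellular game G₂, G₂ ⊨ a ∥ b if and only if |a − b| = 1 or |a − b| > 2. -/

import Mathlib

structure CellularGame where
  S : Type
  u : S → S → S → ℝ

def NashEq (G : CellularGame) (e : ℤ → G.S) : Prop :=
  ∀ (i : ℤ) (s : G.S), G.u (e (i-1)) s (e (i+1)) ≤ G.u (e (i-1)) (e i) (e (i+1))

def Ichg (G : CellularGame) (a b : ℤ) : Prop :=
  ∀ e₁ e₂ : ℤ → G.S, NashEq G e₁ → NashEq G e₂ →
    ∃ e : ℤ → G.S, NashEq G e ∧ e a = e₁ a ∧ e b = e₂ b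

abbrev G2S := ZMod 3 ⊕ (Bool × Bool)

def u1 (x y z : G2S) : ℝ :=
  match x, y, z with
  | Sum.inl a, Sum.inr _, Sum.inl c => if c = a + 2 then 1 else 0
  | _, Sum.inr _, _ => 1
  | _, _, _ => 0

def u2 (x y : G2S) : ℝ :=
  match x, y with
  | Sum.inr (_, x2), Sum.inr (y1, _) => if x2 = y1 then 1 else 0
  | _, _ => 0

def u3 (y z : G2S) : ℝ :=
  match y, z with
  | Sum.inr (_, y2), Sum.inr (z1, _) => if y2 ≠ z1 then 1 else 0
  | _, _ => 0

def G2 : CellularGame := ⟨G2S, fun x y z => u1 x y z + u2 x y + u3 y z⟩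

/-- The "good sequence" condition characterizing Nash equilibria. -/
def Good (c : ℤ → ZMod 3) : Prop :=
  ∀ i : ℤ, c (i+2) - c i = 0 ∨ c (i+2) - c i = 1

lemma G2_u (x y z : G2S) : G2.u x y z = u1 x y z + u2 x y + u3 y z := rfl

lemma nash_forward (e : ℤ → G2S) (h : NashEq G2 e) :
    ∃ c : ℤ → ZMod 3, (∀ i, e i = Sum.inl (c i)) ∧ Good c := by
  have hinl : ∀ i, ∃ c, e i = Sum.inl c := by
    intro i
    rcases h' : e i with c | ⟨p, q⟩
    · exact ⟨c, rfl⟩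
    exfalso
    -- step 1: e (i+1) must be inr
    have h1 : ∃ r s₀, e (i+1) = Sum.inr (r, s₀) := by
      rcases h2 : e (i+1) with d | ⟨r, s₀⟩
      · exfalso
        have hh := h (i+1) (Sum.inr (q, true))
        rw [show (i:ℤ)+1-1 = i from by ring] at hh
        rw [h', h2] at hh
        rcases h3 : e (i+1+1) with d2 | ⟨t1, t2⟩ <;> rw [h3] at hh <;>
          simp [G2_u, u1, u2, u3] at hh <;> first | (split_ifs at hh <;> norm_num at hh) | norm_num at hh
      · exact ⟨r, s₀, rfl⟩
    obtain ⟨r, s₀, h2⟩ := h1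
    -- step 2: q ≠ r
    have hqr : q ≠ r := by
      intro heq
      subst heq
      have hh := h i (Sum.inr (p, !q))
      rw [h', h2] at hh
      rcases h0 : e (i-1) with d | ⟨p1, p2⟩ <;> rw [h0] at hh <;>
        simp [G2_u, u1, u2, u3] at hh <;> first | (split_ifs at hh <;> norm_num at hh) | norm_num at hh
    -- step 3: contradiction at position i+1
    rcases h3 : e (i+1+1) with d | ⟨t1, t2⟩
    · have hh := h (i+1) (Sum.inr (q, true))
      rw [show (i:ℤ)+1-1 = i from by ring] at hh
      rw [h', h2, h3] at hh
      simp [G2_u, u1, u2, u3, hqr] at hh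
      norm_num at hh
    · have hh := h (i+1) (Sum.inr (q, !t1))
      rw [show (i:ℤ)+1-1 = i from by ring] at hh
      rw [h', h2, h3] at hh
      simp [G2_u, u1, u2, u3, hqr] at hh
      (try split_ifs at hh) <;> norm_num at hh
  choose c hc using hinl
  refine ⟨c, hc, ?_⟩
  intro j
  have hh := h (j+1) (Sum.inr (true, true))
  rw [show (j:ℤ)+1-1 = j from by ring, show (j:ℤ)+1+1 = j+2 from by ring] at hh
  rw [hc j, hc (j+2), hc (j+1)] at hh
  simp [G2_u, u1, u2, u3] at hh
  split_ifs at hh with hif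
  · norm_num at hh
  · revert hif
    generalize c (j+2) = y
    generalize c j = x
    revert x y
    decide

lemma nash_backward (c : ℤ → ZMod 3) (hg : Good c) :
    NashEq G2 (fun i => Sum.inl (c i)) := by
  intro i s
  have h2 : c (i+1) ≠ c (i-1) + 2 := by
    have hgi := hg (i-1)
    rw [show (i:ℤ)-1+2 = i+1 from by ring] at hgi
    revert hgi
    generalize c (i+1) = y
    generalize c (i-1) = x
    revert x y
    decide
  rcases s with d | ⟨p, q⟩ <;> simp [G2_u, u1, u2, u3, h2]

lemma good_const (v : ZMod 3) : Good (fun _ => v) := by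
  intro i; left; simp

lemma exists_odd (a b : ℤ) (hodd : ¬ Even (a - b)) (α β : ZMod 3) :
    ∃ c : ℤ → ZMod 3, Good c ∧ c a = α ∧ c b = β := by
  refine ⟨fun i => if Even (i - a) then α else β, ?_, ?_, ?_⟩
  · intro i
    left
    have hpar2 : Even (i + 2 - a) ↔ Even (i - a) := by
      constructor
      · rintro ⟨k, hk⟩; exact ⟨k - 1, by omega⟩
      · rintro ⟨k, hk⟩; exact ⟨k + 1, by omega⟩
    simp only [hpar2]
    split_ifs <;> ring
  · simp
  · have : ¬ Even (b - a) := by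
      intro ⟨k, hk⟩; exact hodd ⟨-k, by omega⟩
    simp [this]

lemma exists_far (a b : ℤ) (h4 : a + 4 ≤ b) (α β : ZMod 3) :
    ∃ c : ℤ → ZMod 3, Good c ∧ c a = α ∧ c b = β := by
  set t : ℤ := ((β - α).val : ℤ) with ht
  have ht0 : 0 ≤ t := Int.natCast_nonneg _
  have ht2 : t ≤ 2 := by
    have := ZMod.val_lt (β - α)
    omega
  refine ⟨fun i => α + ((max 0 (min t ((i - a)/2)) : ℤ) : ZMod 3), ?_, ?_, ?_⟩
  · intro i
    have hstep : (i + 2 - a)/2 = (i - a)/2 + 1 := by omega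
    simp only [hstep]
    set j := (i - a)/2 with hj
    have hcase : max 0 (min t (j+1)) = max 0 (min t j) ∨
        max 0 (min t (j+1)) = max 0 (min t j) + 1 := by
      simp only [min_def, max_def]
      split_ifs <;> omega
    rcases hcase with hcc | hcc
    · left; rw [hcc]; ring
    · right; rw [hcc]; push_cast; ring
  · have : (a - a)/2 = 0 := by omega
    simp [this, min_eq_right ht0]
  · have hge : 2 ≤ (b - a)/2 := by omega
    have h1 : min t ((b - a)/2) = t := min_eq_left (by omega)
    have h2 : max 0 t = t := max_eq_right ht0
    show α + ((max 0 (min t ((b - a)/2)) : ℤ) : ZMod 3) = β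
    rw [h1, h2, ht]
    push_cast
    rw [ZMod.natCast_val, ZMod.cast_id]
    ring

lemma abs_char (a b : ℤ) :
    (|a - b| = 1 ∨ 2 < |a - b|) ↔ (a ≠ b ∧ a - b ≠ 2 ∧ a - b ≠ -2) := by
  rcases le_total a b with hab | hab
  · rw [abs_of_nonpos (by omega)]; omega
  · rw [abs_of_nonneg (by omega)]; omega

theorem g2_inter (a b : ℤ) : Ichg G2 a b ↔ |a - b| = 1 ∨ 2 < |a - b| := by
  rw [abs_char]
  constructor
  · intro hI
    refine ⟨?_, ?_, ?_⟩
    · intro hab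
      obtain ⟨e, hN, hea, heb⟩ := hI (fun _ => Sum.inl 0) (fun _ => Sum.inl 1)
        (nash_backward _ (good_const 0)) (nash_backward _ (good_const 1))
      rw [hab, heb] at hea
      injection hea with hea'
      exact absurd hea' (by decide)
    · intro hab
      obtain ⟨e, hN, hea, heb⟩ := hI (fun _ => Sum.inl 2) (fun _ => Sum.inl 0)
        (nash_backward _ (good_const 2)) (nash_backward _ (good_const 0))
      obtain ⟨c, hc, hg⟩ := nash_forward e hN
      rw [hc a] at hea
      rw [hc b] at heb
      injection hea with hea'
      injection heb with heb'
      have := hg b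
      rw [show b + 2 = a from by omega, hea', heb'] at this
      revert this
      decide
    · intro hab
      obtain ⟨e, hN, hea, heb⟩ := hI (fun _ => Sum.inl 0) (fun _ => Sum.inl 2)
        (nash_backward _ (good_const 0)) (nash_backward _ (good_const 2))
      obtain ⟨c, hc, hg⟩ := nash_forward e hN
      rw [hc a] at hea
      rw [hc b] at heb
      injection hea with hea'
      injection heb with heb'
      have := hg a
      rw [show a + 2 = b from by omega, hea', heb'] at this
      revert this
      decide
  · rintro ⟨hne, hp2, hm2⟩ e₁ e₂ h₁ h₂
    obtain ⟨c₁, hc₁, hg₁⟩ := nash_forward e₁ h₁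
    obtain ⟨c₂, hc₂, hg₂⟩ := nash_forward e₂ h₂
    by_cases hpar : Even (a - b)
    · have hfar : a + 4 ≤ b ∨ b + 4 ≤ a := by
        obtain ⟨k, hk⟩ := hpar; omega
      rcases hfar with hf | hf
      · obtain ⟨c, hg, ha, hb⟩ := exists_far a b hf (c₁ a) (c₂ b)
        exact ⟨fun i => Sum.inl (c i), nash_backward c hg,
          by simp only [hc₁ a, ha]; rfl, by simp only [hc₂ b, hb]; rfl⟩
      · obtain ⟨c, hg, hb, ha⟩ := exists_far b a hf (c₂ b) (c₁ a)
        exact ⟨fun i => Sum.inl (c i), nash_backward c hg,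
          by simp only [hc₁ a, ha]; rfl, by simp only [hc₂ b, hb]; rfl⟩
    · obtain ⟨c, hg, ha, hb⟩ := exists_odd a b hpar (c₁ a) (c₂ b)
      exact ⟨fun i => Sum.inl (c i), nash_backward c hg,
        by simp only [hc₁ a, ha]; rfl, by simp only [hc₂ b, hb]; rfl⟩
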